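/- In the survival setup, let ν : 𝒳 × ℝ → ℝ be a fixed measurable non-conformity score function and let α ∈ (0,1). Let 𝒟¹ = {i ∈ {1, …, n} : Δ_i = 1}, let m = |𝒟¹|, let q̂ be the ⌈(1−α)(m+1)⌉-th smallest value among {ν(X_i, T̃_i) : i ∈ 𝒟¹} if ⌈(1−α)(m+1)⌉ ≤ m and q̂ = +∞ otherwise, and define the prediction set Ĉ_1(X_{n+1}) = {t ∈ ℝ : ν(X_{n+1}, t) ≤ q̂}. If P(Δ_{n+1} = 1) > 0, then P(T_{n+1} ∈ Ĉ_1(X_{n+1}) | Δ_{n+1} = 1) ≥ 1 − α. -/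

import Mathlib

open MeasureTheory ProbabilityTheory

/-- The `k`-th smallest element (`k ≥ 1`) of a finite multiset of reals, as an
extended real; equal to `+∞` when `k` exceeds the number of elements. -/
noncomputable def kthSmallest (s : Multiset ℝ) (k : ℕ) : EReal :=
  if k ≤ Multiset.card s then (((s.sort (· ≤ ·)).getD (k - 1) 0 : ℝ) : EReal) else ⊤

open scoped ENNReal

open scoped Classical in
lemma le_kthSmallest_iff (s : Multiset ℝ) (k : ℕ) (hk : 1 ≤ k) (v : ℝ) :
    ((v : EReal) ≤ kthSmallest s k) ↔
      Multiset.card (Multiset.filter (fun x => x < v) s) < k := by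
  unfold kthSmallest
  by_cases hks : k ≤ Multiset.card s
  · rw [if_pos hks]
    set L := s.sort (· ≤ ·) with hL
    have hlen : L.length = Multiset.card s := s.length_sort _
    have hsort : L.Pairwise (· ≤ ·) := s.pairwise_sort _
    have hcount : Multiset.card (Multiset.filter (fun x => x < v) s)
        = L.countP (fun x => decide (x < v)) := by
      rw [← Multiset.countP_eq_card_filter]
      conv_lhs => rw [← Multiset.sort_eq s (· ≤ ·)]
      rw [Multiset.coe_countP]
    have hk1 : k - 1 < L.length := by omega
    rw [List.getD_eq_getElem L 0 hk1, EReal.coe_le_coe_iff, hcount]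
    have hgd : L[k-1] = L.get ⟨k-1, hk1⟩ := by simp
    constructor
    · intro h
      have h1 : (L.take (k-1)).countP (fun x => decide (x < v)) ≤ k - 1 :=
        le_trans List.countP_le_length (by simp [List.length_take])
      have h2 : (L.drop (k-1)).countP (fun x => decide (x < v)) = 0 := by
        rw [List.countP_eq_zero]
        intro a ha
        obtain ⟨i, hi, hieq⟩ := List.getElem_of_mem ha
        have hlt : (k-1) + i < L.length := by
          rw [List.length_drop] at hi; omega
        have ha' : a = L.get ⟨(k-1)+i, hlt⟩ := by
          rw [← hieq]
          simp only [List.get_eq_getElem]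
          rw [List.getElem_drop' hlt]
        have hle : L.get ⟨k-1, hk1⟩ ≤ L.get ⟨(k-1)+i, hlt⟩ :=
          hsort.rel_get_of_le (by simp [Fin.mk_le_mk])
        rw [hgd] at h
        simp only [decide_eq_true_eq, ha']
        exact not_lt.2 (le_trans h hle)
      have h3 : L.countP (fun x => decide (x < v))
          = (L.take (k-1)).countP (fun x => decide (x < v))
            + (L.drop (k-1)).countP (fun x => decide (x < v)) := by
        rw [← List.countP_append, List.take_append_drop]
      omega
    · intro h
      by_contra hv
      push_neg at hv
      have hkle : k ≤ L.length := by omega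
      have hall : ∀ a ∈ L.take k, decide (a < v) = true := by
        intro a ha
        obtain ⟨i, hi, hieq⟩ := List.getElem_of_mem ha
        have hik : i < k := by
          rw [List.length_take] at hi; omega
        have hil : i < L.length := by omega
        have ha' : a = L.get ⟨i, hil⟩ := by
          rw [← hieq]; simp only [List.get_eq_getElem]
          rw [List.getElem_take]
        have hle : L.get ⟨i, hil⟩ ≤ L.get ⟨k-1, hk1⟩ :=
          hsort.rel_get_of_le (by simp [Fin.mk_le_mk]; omega)
        rw [hgd] at hv
        simp only [decide_eq_true_eq, ha']
        exact lt_of_le_of_lt hle hv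
      have : k ≤ L.countP (fun x => decide (x < v)) := by
        calc k = (L.take k).length := by rw [List.length_take]; omega
          _ = (L.take k).countP (fun x => decide (x < v)) :=
              (List.countP_eq_length.mpr hall).symm
          _ ≤ L.countP (fun x => decide (x < v)) :=
              (List.take_sublist _ _).countP_le
      omega
  · rw [if_neg hks]
    simp only [le_top, true_iff]
    have := Multiset.card_le_card (Multiset.filter_le (fun x => x < v) s)
    omega

open scoped Classical in
lemma rank_count_lemma {ι : Type*} [DecidableEq ι] (g : ι → ℝ) :
    ∀ (k : ℕ), 1 ≤ k → ∀ (F : Finset ι),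
      min k F.card ≤
        (F.filter (fun j => ((F.erase j).filter (fun i => g i < g j)).card < k)).card := by
  intro k
  induction k with
  | zero => intro h; omega
  | succ k ih =>
    intro _ F
    rcases F.eq_empty_or_nonempty with rfl | hne
    · simp
    obtain ⟨j0, hj0F, hj0min⟩ := F.exists_min_image g hne
    have hj0cond : ((F.erase j0).filter (fun i => g i < g j0)).card < k + 1 := by
      have hemp : (F.erase j0).filter (fun i => g i < g j0) = ∅ :=
        Finset.filter_eq_empty_iff.2
          (fun _ hi => not_lt.2 (hj0min _ (Finset.mem_of_mem_erase hi)))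
      simp [hemp]
    have hj0mem : j0 ∈ F.filter
        (fun j => ((F.erase j).filter (fun i => g i < g j)).card < k + 1) :=
      Finset.mem_filter.2 ⟨hj0F, hj0cond⟩
    by_cases hk : k = 0
    · subst hk
      have h1 : 1 ≤ (F.filter
          (fun j => ((F.erase j).filter (fun i => g i < g j)).card < 0 + 1)).card :=
        Finset.card_pos.2 ⟨j0, hj0mem⟩
      exact le_trans (Nat.min_le_left _ _) h1
    · have hk1 : 1 ≤ k := by omega
      have ih' := ih hk1 (F.erase j0)
      have hsub : (F.erase j0).filter
            (fun j => (((F.erase j0).erase j).filter (fun i => g i < g j)).card < k)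
          ⊆ F.filter (fun j => ((F.erase j).filter (fun i => g i < g j)).card < k + 1) := by
        intro j hj
        rw [Finset.mem_filter] at hj ⊢
        obtain ⟨hjF', hjc⟩ := hj
        have hjF : j ∈ F := Finset.mem_of_mem_erase hjF'
        have hjne : j ≠ j0 := Finset.ne_of_mem_erase hjF'
        refine ⟨hjF, ?_⟩
        have hj0mem' : j0 ∈ F.erase j := Finset.mem_erase.2 ⟨Ne.symm hjne, hj0F⟩
        have hins : F.erase j = insert j0 ((F.erase j0).erase j) := by
          have hcomm : (F.erase j0).erase j = (F.erase j).erase j0 := by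
            ext x; simp only [Finset.mem_erase]; tauto
          rw [hcomm]
          exact (Finset.insert_erase hj0mem').symm
        rw [hins, Finset.filter_insert]
        split_ifs with hgg
        · rw [Finset.card_insert_of_notMem]
          · omega
          · intro hmem
            exact (Finset.notMem_erase j0 F)
              (Finset.mem_of_mem_erase (Finset.mem_of_mem_filter _ hmem))
        · omega
      have hj0not : j0 ∉ (F.erase j0).filter
          (fun j => (((F.erase j0).erase j).filter (fun i => g i < g j)).card < k) :=
        fun h => Finset.notMem_erase j0 F (Finset.mem_of_mem_filter _ h)
      have hins2 : insert j0 ((F.erase j0).filter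
            (fun j => (((F.erase j0).erase j).filter (fun i => g i < g j)).card < k))
          ⊆ F.filter (fun j => ((F.erase j).filter (fun i => g i < g j)).card < k + 1) :=
        Finset.insert_subset hj0mem hsub
      have hcard := Finset.card_le_card hins2
      rw [Finset.card_insert_of_notMem hj0not] at hcard
      have hec : (F.erase j0).card = F.card - 1 := Finset.card_erase_of_mem hj0F
      rw [hec] at ih'
      have hFpos : 1 ≤ F.card := Finset.card_pos.2 hne
      omega

open scoped Classical in
lemma mul_meas_le_sum {Ω : Type*} [MeasurableSpace Ω] (μ : Measure Ω) {ι : Type*}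
    (F : Finset ι) (S : Set Ω) (Sj : ι → Set Ω) (hS : MeasurableSet S)
    (hSj : ∀ j, MeasurableSet (Sj j)) (k : ℕ)
    (h : ∀ y, k ≤ (F.filter (fun j => y ∈ Sj j)).card) :
    (k : ℝ≥0∞) * μ S ≤ ∑ j ∈ F, μ (S ∩ Sj j) := by
  have hmeasj : ∀ j, Measurable ((S ∩ Sj j).indicator (fun _ => (1 : ℝ≥0∞))) :=
    fun j => measurable_const.indicator (hS.inter (hSj j))
  calc (k : ℝ≥0∞) * μ S
      = ∫⁻ y, S.indicator (fun _ => (k : ℝ≥0∞)) y ∂μ := by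
        rw [lintegral_indicator_const hS]
    _ ≤ ∫⁻ y, ∑ j ∈ F, (S ∩ Sj j).indicator (fun _ => (1 : ℝ≥0∞)) y ∂μ := by
        refine lintegral_mono fun y => ?_
        by_cases hy : y ∈ S
        · rw [Set.indicator_of_mem hy]
          have : ∑ j ∈ F, (S ∩ Sj j).indicator (fun _ => (1 : ℝ≥0∞)) y
              = ((F.filter (fun j => y ∈ Sj j)).card : ℝ≥0∞) := by
            rw [← Finset.sum_boole]
            refine Finset.sum_congr rfl fun j _ => ?_
            by_cases hyj : y ∈ Sj j
            · rw [Set.indicator_of_mem (Set.mem_inter hy hyj), if_pos hyj]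
            · rw [Set.indicator_of_notMem (fun hc => hyj hc.2), if_neg hyj]
          rw [this]
          exact (Nat.cast_le (α := ℝ≥0∞)).2 (h y)
        · rw [Set.indicator_of_notMem hy]
          exact zero_le
    _ = ∑ j ∈ F, μ (S ∩ Sj j) := by
        rw [lintegral_finset_sum _ fun j _ => hmeasj j]
        refine Finset.sum_congr rfl fun j _ => ?_
        exact lintegral_indicator_one (hS.inter (hSj j))

lemma pi_map_comp {γ : Type*} [MeasurableSpace γ] (ρ : Measure γ) [IsProbabilityMeasure ρ]
    {N : ℕ} (e : Fin N ≃ Fin N) :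
    (Measure.pi fun _ : Fin N => ρ).map (fun y => y ∘ e) = Measure.pi (fun _ : Fin N => ρ) := by
  have hΦ : Measurable (fun y : Fin N → γ => y ∘ e) :=
    measurable_pi_lambda _ fun i => measurable_pi_apply _
  refine (Measure.pi_eq (μ := fun _ => ρ) fun t ht => ?_).symm
  rw [Measure.map_apply hΦ (MeasurableSet.univ_pi ht)]
  have hpre : (fun y : Fin N → γ => y ∘ e) ⁻¹' (Set.univ.pi t)
      = Set.univ.pi (fun i => t (e.symm i)) := by
    ext y
    simp only [Set.mem_preimage, Set.mem_univ_pi, Function.comp]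
    constructor
    · intro h i; have := h (e.symm i); simpa using this
    · intro h i; simpa using h (e i)
  rw [hpre, Measure.pi_pi]
  exact Equiv.prod_comp e.symm fun i => ρ (t i)

/-- **Conditional coverage of the two-sided component** (guarantee (4) for the
prediction set (9) of the paper).  The triples `(X i, T i, C i)`, `i = 0, …, n`,
are i.i.d. (calibration indices are `Fin n` via `Fin.castSucc`, the test index is
`Fin.last n`); `T̃ᵢ = min(Tᵢ, Cᵢ)` is the censored survival time and `Δᵢ = 1{Tᵢ ≤ Cᵢ}`
the event indicator.  Calibrating the score `ν` on the non-censored calibration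
points `𝒟¹ = {i : Δᵢ = 1}` at level `α` — i.e. taking `q̂` as the
`⌈(1-α)(|𝒟¹|+1)⌉`-th smallest of `{ν(Xᵢ, T̃ᵢ) : i ∈ 𝒟¹}`, `+∞` if
`⌈(1-α)(|𝒟¹|+1)⌉ > |𝒟¹|` — and setting `Ĉ₁(x) = {t : ν(x,t) ≤ q̂}`, one has
`P(T_{n+1} ∈ Ĉ₁(X_{n+1}) | Δ_{n+1} = 1) ≥ 1 - α` whenever `P(Δ_{n+1} = 1) > 0`. -/
theorem two_sided_conditional_coverage
    {Ω : Type*} [MeasurableSpace Ω] (μ : Measure Ω) [IsProbabilityMeasure μ]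
    {𝒳 : Type*} [MeasurableSpace 𝒳]
    (n : ℕ) (X : Fin (n + 1) → Ω → 𝒳) (T C : Fin (n + 1) → Ω → ℝ)
    (hmeas : ∀ i, Measurable (fun ω => (X i ω, T i ω, C i ω)))
    (hindep : iIndepFun
      (fun i ω => (X i ω, T i ω, C i ω)) μ)
    (hident : ∀ i, IdentDistrib (fun ω => (X i ω, T i ω, C i ω))
      (fun ω => (X 0 ω, T 0 ω, C 0 ω)) μ μ)
    (ν : 𝒳 → ℝ → ℝ) (hν : Measurable (Function.uncurry ν))
    (α : ℝ) (hα0 : 0 < α) (hα1 : α < 1)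
    (D1 : Ω → Finset (Fin n))
    (hD1 : ∀ ω, D1 ω = Finset.univ.filter
      (fun i : Fin n => T i.castSucc ω ≤ C i.castSucc ω))
    (qhat : Ω → EReal)
    (hqhat : ∀ ω, qhat ω =
      kthSmallest
        ((D1 ω).val.map
          (fun i => ν (X i.castSucc ω) (min (T i.castSucc ω) (C i.castSucc ω))))
        ⌈(1 - α) * (((D1 ω).card : ℝ) + 1)⌉₊)
    (hpos : μ {ω | T (Fin.last n) ω ≤ C (Fin.last n) ω} ≠ 0) :
    ENNReal.ofReal (1 - α)
      ≤ μ[{ω | (ν (X (Fin.last n) ω) (T (Fin.last n) ω) : EReal) ≤ qhat ω} |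
          {ω | T (Fin.last n) ω ≤ C (Fin.last n) ω}] := by
  classical
  -- basic measurability
  have hXm : ∀ i, Measurable (X i) := fun i => (hmeas i).fst
  have hTm : ∀ i, Measurable (T i) := fun i => (hmeas i).snd.fst
  have hCm : ∀ i, Measurable (C i) := fun i => (hmeas i).snd.snd
  set E : Set Ω := {ω | T (Fin.last n) ω ≤ C (Fin.last n) ω} with hE
  have hEm : MeasurableSet E := measurableSet_le (hTm _) (hCm _)
  set Aset : Set Ω :=
    {ω | (ν (X (Fin.last n) ω) (T (Fin.last n) ω) : EReal) ≤ qhat ω} with hAset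
  -- the joint vector
  set Y : Ω → (Fin (n+1) → 𝒳 × ℝ × ℝ) := fun ω i => (X i ω, T i ω, C i ω) with hY
  have hYmeas : Measurable Y := measurable_pi_lambda _ fun i => hmeas i
  set ρ : Measure (𝒳 × ℝ × ℝ) := μ.map (fun ω => (X 0 ω, T 0 ω, C 0 ω)) with hρ
  haveI : IsProbabilityMeasure ρ := Measure.isProbabilityMeasure_map (hmeas 0).aemeasurable
  have hmap : μ.map Y = Measure.pi (fun _ : Fin (n+1) => ρ) := by
    refine (Measure.pi_eq (μ := fun _ => ρ) fun t ht => ?_).symm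
    rw [Measure.map_apply hYmeas (MeasurableSet.univ_pi ht)]
    have hpre : Y ⁻¹' (Set.univ.pi t)
        = ⋂ i ∈ (Finset.univ : Finset (Fin (n+1))),
            (fun ω => (X i ω, T i ω, C i ω)) ⁻¹' (t i) := by
      ext ω; simp [hY, Set.mem_univ_pi]
    rw [hpre, hindep.measure_inter_preimage_eq_mul Finset.univ (fun i _ => ht i)]
    refine Finset.prod_congr rfl fun i _ => ?_
    rw [← Measure.map_apply (hmeas i) (ht i), (hident i).map_eq]
  have hinv : ∀ (e : Fin (n+1) ≃ Fin (n+1)) (S : Set (Fin (n+1) → 𝒳 × ℝ × ℝ)),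
      MeasurableSet S → μ ((fun ω => Y ω ∘ e) ⁻¹' S) = μ (Y ⁻¹' S) := by
    intro e S hSm
    have hΦ : Measurable (fun y : Fin (n+1) → 𝒳 × ℝ × ℝ => y ∘ e) :=
      measurable_pi_lambda _ fun i => measurable_pi_apply _
    have h1 : (fun ω => Y ω ∘ e) ⁻¹' S = Y ⁻¹' ((fun y => y ∘ e) ⁻¹' S) := rfl
    rw [h1, ← Measure.map_apply hYmeas (hΦ hSm), hmap,
      ← Measure.map_apply hΦ hSm, pi_map_comp ρ e, ← hmap,
      Measure.map_apply hYmeas hSm]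
  -- scores
  set g : (Fin (n+1) → 𝒳 × ℝ × ℝ) → Fin (n+1) → ℝ :=
    fun y i => ν (y i).1 (min (y i).2.1 (y i).2.2) with hg
  have hgm : ∀ i, Measurable fun y => g y i := by
    intro i
    have : (fun y => g y i)
        = (Function.uncurry ν) ∘ (fun y : Fin (n+1) → 𝒳 × ℝ × ℝ =>
            ((y i).1, min (y i).2.1 (y i).2.2)) := rfl
    rw [this]
    exact hν.comp (((measurable_pi_apply i).fst).prodMk
      (((measurable_pi_apply i).snd.fst).min ((measurable_pi_apply i).snd.snd)))
  -- events in the product space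
  set G : (Fin n → Bool) → Set (Fin (n+1) → 𝒳 × ℝ × ℝ) := fun δ =>
    {y | ∀ i, ((y i).2.1 ≤ (y i).2.2 ↔
      (Fin.snoc δ true : Fin (n+1) → Bool) i = true)} with hG
  set D : (Fin n → Bool) → Finset (Fin n) := fun δ =>
    Finset.univ.filter (fun i => δ i = true) with hD
  set F : (Fin n → Bool) → Finset (Fin (n+1)) := fun δ =>
    Finset.univ.filter (fun i => (Fin.snoc δ true : Fin (n+1) → Bool) i = true) with hF
  set km : (Fin n → Bool) → ℕ := fun δ =>
    ⌈(1 - α) * (((D δ).card : ℝ) + 1)⌉₊ with hkm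
  set A : (Fin n → Bool) → Fin (n+1) → Set (Fin (n+1) → 𝒳 × ℝ × ℝ) := fun δ j =>
    {y | (((F δ).erase j).filter (fun i => g y i < g y j)).card < km δ} with hA
  have hlastF : ∀ δ, Fin.last n ∈ F δ := by
    intro δ; simp [hF]
  have hFerase : ∀ δ, (F δ).erase (Fin.last n) = (D δ).map Fin.castSuccEmb := by
    intro δ
    ext i
    simp only [Finset.mem_erase, Finset.mem_map, Finset.mem_filter, Finset.mem_univ,
      true_and, hF, hD]
    constructor
    · rintro ⟨hne, hsnoc⟩
      refine ⟨i.castPred hne, ?_, Fin.castSucc_castPred i hne⟩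
      have h2 : (Fin.snoc δ true : Fin (n+1) → Bool) ((i.castPred hne).castSucc) = true := by
        rw [Fin.castSucc_castPred]; exact hsnoc
      rwa [Fin.snoc_castSucc] at h2
    · rintro ⟨j, hj, rfl⟩
      constructor
      · exact (Fin.castSucc_lt_last j).ne
      · show (Fin.snoc δ true : Fin (n+1) → Bool) (j.castSucc) = true
        rw [Fin.snoc_castSucc]; exact hj
  have hFcard : ∀ δ, (F δ).card = (D δ).card + 1 := by
    intro δ
    have h1 := Finset.card_erase_of_mem (hlastF δ)
    rw [hFerase δ, Finset.card_map] at h1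
    have h2 : 1 ≤ (F δ).card := Finset.card_pos.2 ⟨_, hlastF δ⟩
    omega
  have hGm : ∀ δ, MeasurableSet (G δ) := by
    intro δ
    have hGi : G δ = ⋂ i, {y : Fin (n+1) → 𝒳 × ℝ × ℝ |
        ((y i).2.1 ≤ (y i).2.2 ↔ (Fin.snoc δ true : Fin (n+1) → Bool) i = true)} := by
      ext y; simp [hG]
    rw [hGi]
    refine MeasurableSet.iInter fun i => ?_
    have hle : MeasurableSet {y : Fin (n+1) → 𝒳 × ℝ × ℝ | (y i).2.1 ≤ (y i).2.2} :=
      measurableSet_le ((measurable_pi_apply i).snd.fst) ((measurable_pi_apply i).snd.snd)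
    by_cases hb : (Fin.snoc δ true : Fin (n+1) → Bool) i = true
    · have hset : {y : Fin (n+1) → 𝒳 × ℝ × ℝ | ((y i).2.1 ≤ (y i).2.2 ↔
          (Fin.snoc δ true : Fin (n+1) → Bool) i = true)}
          = {y : Fin (n+1) → 𝒳 × ℝ × ℝ | (y i).2.1 ≤ (y i).2.2} := by
        ext y; simp [hb]
      rw [hset]; exact hle
    · have hset : {y : Fin (n+1) → 𝒳 × ℝ × ℝ | ((y i).2.1 ≤ (y i).2.2 ↔
          (Fin.snoc δ true : Fin (n+1) → Bool) i = true)}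
          = {y : Fin (n+1) → 𝒳 × ℝ × ℝ | (y i).2.1 ≤ (y i).2.2}ᶜ := by
        ext y; simp [hb]
      rw [hset]; exact hle.compl
  have hAm : ∀ δ j, MeasurableSet (A δ j) := by
    intro δ j
    have hcard : Measurable fun y : Fin (n+1) → 𝒳 × ℝ × ℝ =>
        (((F δ).erase j).filter (fun i => g y i < g y j)).card := by
      have heq : (fun y : Fin (n+1) → 𝒳 × ℝ × ℝ =>
            (((F δ).erase j).filter (fun i => g y i < g y j)).card)
          = fun y => ∑ i ∈ (F δ).erase j, if g y i < g y j then 1 else 0 :=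
        funext fun y => Finset.card_filter _ _
      rw [heq]
      exact Finset.measurable_sum _ fun i _ =>
        Measurable.ite (measurableSet_lt (hgm i) (hgm j)) measurable_const measurable_const
    exact hcard (MeasurableSet.of_discrete (s := {c : ℕ | c < km δ}))
  have hswap : ∀ δ, ∀ j ∈ (F δ).erase (Fin.last n),
      μ (Y ⁻¹' (G δ ∩ A δ j)) = μ (Y ⁻¹' (G δ ∩ A δ (Fin.last n))) := by
    intro δ j hj
    obtain ⟨hjne, hjF⟩ := Finset.mem_erase.1 hj
    set e := Equiv.swap j (Fin.last n) with he
    have heF : ∀ i, i ∈ F δ ↔ e i ∈ F δ := by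
      intro i
      by_cases h1 : i = j
      · subst h1; rw [he, Equiv.swap_apply_left]; simp [hjF, hlastF δ]
      · by_cases h2 : i = Fin.last n
        · subst h2; rw [he, Equiv.swap_apply_right]; simp [hjF, hlastF δ]
        · rw [he, Equiv.swap_apply_of_ne_of_ne h1 h2]
    have hjT : (Fin.snoc δ true : Fin (n+1) → Bool) j = true := by
      have h3 := hjF; rw [hF] at h3
      simpa using h3
    have hlT : (Fin.snoc δ true : Fin (n+1) → Bool) (Fin.last n) = true := by simp
    have hsnoc_e : ∀ i, (Fin.snoc δ true : Fin (n+1) → Bool) (e i)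
        = (Fin.snoc δ true : Fin (n+1) → Bool) i := by
      intro i
      by_cases h1 : i = j
      · subst h1; rw [he, Equiv.swap_apply_left, hjT, hlT]
      · by_cases h2 : i = Fin.last n
        · subst h2; rw [he, Equiv.swap_apply_right, hjT, hlT]
        · rw [he, Equiv.swap_apply_of_ne_of_ne h1 h2]
    have hepre : (fun y : Fin (n+1) → 𝒳 × ℝ × ℝ => y ∘ e) ⁻¹' (G δ ∩ A δ (Fin.last n))
        = G δ ∩ A δ j := by
      ext y
      simp only [Set.mem_preimage, Set.mem_inter_iff]
      have hGiff : (y ∘ e ∈ G δ) ↔ y ∈ G δ := by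
        simp only [hG, Set.mem_setOf_eq, Function.comp_apply]
        constructor
        · intro h i
          have h4 := h (e i)
          rw [Equiv.swap_apply_self] at h4
          rw [hsnoc_e i] at h4
          exact h4
        · intro h i
          rw [← hsnoc_e i]
          exact h (e i)
      have hAiff : (y ∘ e ∈ A δ (Fin.last n)) ↔ y ∈ A δ j := by
        simp only [hA, Set.mem_setOf_eq]
        have hge : ∀ i, g (y ∘ e) i = g y (e i) := fun i => rfl
        have hgl : g (y ∘ e) (Fin.last n) = g y j := by
          rw [hge, he, Equiv.swap_apply_right]
        have hFimg : (F δ).image e = F δ := by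
          ext x
          simp only [Finset.mem_image]
          constructor
          · rintro ⟨a, ha, rfl⟩; exact (heF a).1 ha
          · intro hx
            exact ⟨e x, (heF x).1 hx, Equiv.swap_apply_self _ _ _⟩
        have himg : ((F δ).erase (Fin.last n)).image e = (F δ).erase j := by
          rw [Finset.image_erase (Equiv.injective e), hFimg, he, Equiv.swap_apply_right]
        have hcards : (((F δ).erase (Fin.last n)).filter
              (fun i => g (y ∘ e) i < g (y ∘ e) (Fin.last n))).card
            = (((F δ).erase j).filter (fun i => g y i < g y j)).card := by
          have hfc : (((F δ).erase (Fin.last n)).filter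
                (fun i => g (y ∘ e) i < g (y ∘ e) (Fin.last n)))
              = (((F δ).erase (Fin.last n)).filter (fun a => g y (e a) < g y j)) := by
            apply Finset.filter_congr
            intro i hi
            rw [hge, hgl]
          rw [hfc]
          calc (((F δ).erase (Fin.last n)).filter (fun a => g y (e a) < g y j)).card
              = ((((F δ).erase (Fin.last n)).filter (fun a => g y (e a) < g y j)).image e).card :=
                (Finset.card_image_of_injective _ (Equiv.injective e)).symm
            _ = ((((F δ).erase (Fin.last n)).image e).filter (fun i => g y i < g y j)).card := by
                rw [Finset.filter_image]
            _ = (((F δ).erase j).filter (fun i => g y i < g y j)).card := by rw [himg]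
        rw [hcards]
      exact and_congr hGiff hAiff
    calc μ (Y ⁻¹' (G δ ∩ A δ j))
        = μ ((fun ω => Y ω ∘ e) ⁻¹' (G δ ∩ A δ (Fin.last n))) := by
          rw [← hepre]; rfl
      _ = μ (Y ⁻¹' (G δ ∩ A δ (Fin.last n))) :=
          hinv e _ ((hGm δ).inter (hAm δ (Fin.last n)))
  have hGE : ∀ δ ω, Y ω ∈ G δ → ω ∈ E := by
    intro δ ω h
    have h' : ∀ i, ((Y ω i).2.1 ≤ (Y ω i).2.2 ↔
        (Fin.snoc δ true : Fin (n+1) → Bool) i = true) := h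
    have h4 := h' (Fin.last n)
    rw [Fin.snoc_last] at h4
    exact h4.2 rfl
  have hD1eq : ∀ δ ω, Y ω ∈ G δ → D1 ω = D δ := by
    intro δ ω h
    have h' : ∀ i, ((Y ω i).2.1 ≤ (Y ω i).2.2 ↔
        (Fin.snoc δ true : Fin (n+1) → Bool) i = true) := h
    rw [hD1, hD]
    apply Finset.filter_congr
    intro i _
    have h4 := h' i.castSucc
    rw [Fin.snoc_castSucc] at h4
    exact h4
  have hmulti : ∀ (δ : Fin n → Bool) (ω : Ω),
      (D δ).val.map (fun i => ν (X i.castSucc ω) (min (T i.castSucc ω) (C i.castSucc ω)))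
        = ((F δ).erase (Fin.last n)).val.map (fun i => g (Y ω) i) := by
    intro δ ω
    rw [hFerase δ, Finset.map_val, Multiset.map_map]
    rfl
  have hscore : ∀ ω, ω ∈ E → g (Y ω) (Fin.last n)
      = ν (X (Fin.last n) ω) (T (Fin.last n) ω) := by
    intro ω hω
    show ν (X (Fin.last n) ω) (min (T (Fin.last n) ω) (C (Fin.last n) ω))
      = ν (X (Fin.last n) ω) (T (Fin.last n) ω)
    rw [min_eq_left hω]
  have hk1 : ∀ δ, 1 ≤ km δ := by
    intro δ
    have hc := Nat.cast_nonneg (α := ℝ) (D δ).card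
    refine Nat.one_le_ceil_iff.2 (mul_pos (by linarith) (by linarith))
  have hkm1 : ∀ δ, km δ ≤ (D δ).card + 1 := by
    intro δ
    have hc := Nat.cast_nonneg (α := ℝ) (D δ).card
    refine Nat.ceil_le.2 ?_
    push_cast
    nlinarith [hc]
  have hAiff : ∀ δ ω, Y ω ∈ G δ → (ω ∈ Aset ↔ Y ω ∈ A δ (Fin.last n)) := by
    intro δ ω h
    have hωE : ω ∈ E := hGE δ ω h
    have hq : qhat ω = kthSmallest
        (((F δ).erase (Fin.last n)).val.map (fun i => g (Y ω) i)) (km δ) := by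
      rw [hqhat ω, hD1eq δ ω h, hmulti δ ω, hkm]
    have hsv : g (Y ω) (Fin.last n) = ν (X (Fin.last n) ω) (T (Fin.last n) ω) :=
      hscore ω hωE
    have hmem : ω ∈ Aset ↔ ((ν (X (Fin.last n) ω) (T (Fin.last n) ω) : EReal) ≤ qhat ω) := by
      rw [hAset]; exact Iff.rfl
    rw [hmem, hq, le_kthSmallest_iff _ _ (hk1 δ)]
    have hcc : Multiset.card (Multiset.filter
          (fun x => x < ν (X (Fin.last n) ω) (T (Fin.last n) ω))
          (((F δ).erase (Fin.last n)).val.map (fun i => g (Y ω) i)))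
        = (((F δ).erase (Fin.last n)).filter
            (fun i => g (Y ω) i < g (Y ω) (Fin.last n))).card := by
      rw [← Multiset.countP_eq_card_filter, Multiset.countP_map, hsv]
      rfl
    rw [hcc]
    simp only [hA, Set.mem_setOf_eq]
  have hEunion : E = ⋃ δ ∈ (Finset.univ : Finset (Fin n → Bool)), Y ⁻¹' G δ := by
    ext ω
    simp only [Set.mem_iUnion, Finset.mem_univ, exists_prop, true_and]
    constructor
    · intro hω
      refine ⟨fun i => decide (T i.castSucc ω ≤ C i.castSucc ω), ?_⟩
      intro i
      refine Fin.lastCases ?_ ?_ i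
      · rw [Fin.snoc_last]
        exact ⟨fun _ => rfl, fun _ => hω⟩
      · intro j
        rw [Fin.snoc_castSucc]
        simp only [decide_eq_true_eq]
        exact Iff.rfl
    · rintro ⟨δ, hδ⟩
      exact hGE δ ω hδ
  have hdisj : Set.PairwiseDisjoint (↑(Finset.univ : Finset (Fin n → Bool)))
      (fun δ => Y ⁻¹' G δ) := by
    intro δ1 _ δ2 _ hne
    refine Set.disjoint_left.2 fun ω h1 h2 => hne ?_
    have h1' : ∀ i, ((Y ω i).2.1 ≤ (Y ω i).2.2 ↔
        (Fin.snoc δ1 true : Fin (n+1) → Bool) i = true) := h1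
    have h2' : ∀ i, ((Y ω i).2.1 ≤ (Y ω i).2.2 ↔
        (Fin.snoc δ2 true : Fin (n+1) → Bool) i = true) := h2
    funext i
    have e1 := h1' i.castSucc
    have e2 := h2' i.castSucc
    rw [Fin.snoc_castSucc] at e1 e2
    have hiff : (δ1 i = true) ↔ (δ2 i = true) := e1.symm.trans e2
    rcases Bool.eq_false_or_eq_true (δ1 i) with hb1 | hb1 <;>
      rcases Bool.eq_false_or_eq_true (δ2 i) with hb2 | hb2 <;>
      rw [hb1, hb2] <;> rw [hb1, hb2] at hiff <;> tauto
  have hEdecomp : μ E = ∑ δ ∈ (Finset.univ : Finset (Fin n → Bool)), μ (Y ⁻¹' G δ) := by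
    rw [hEunion, measure_biUnion_finset hdisj (fun δ _ => hYmeas (hGm δ))]
  have hEAunion : E ∩ Aset
      = ⋃ δ ∈ (Finset.univ : Finset (Fin n → Bool)),
          Y ⁻¹' (G δ ∩ A δ (Fin.last n)) := by
    ext ω
    simp only [Set.mem_inter_iff, Set.mem_iUnion, Finset.mem_univ, exists_prop, true_and]
    constructor
    · rintro ⟨hωE, hωA⟩
      rw [hEunion] at hωE
      simp only [Set.mem_iUnion, Finset.mem_univ, exists_prop, true_and] at hωE
      obtain ⟨δ, hδ⟩ := hωE
      exact ⟨δ, hδ, (hAiff δ ω hδ).1 hωA⟩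
    · rintro ⟨δ, hδ⟩
      have hδG : Y ω ∈ G δ := hδ.1
      exact ⟨hGE δ ω hδG, (hAiff δ ω hδG).2 hδ.2⟩
  have hEAdecomp : μ (E ∩ Aset)
      = ∑ δ ∈ (Finset.univ : Finset (Fin n → Bool)),
          μ (Y ⁻¹' (G δ ∩ A δ (Fin.last n))) := by
    rw [hEAunion]
    refine measure_biUnion_finset ?_ (fun δ _ => hYmeas ((hGm δ).inter (hAm δ _)))
    intro δ1 hm1 δ2 hm2 hne
    exact Disjoint.mono (Set.preimage_mono Set.inter_subset_left)
      (Set.preimage_mono Set.inter_subset_left) (hdisj hm1 hm2 hne)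
  have key : ∀ δ : Fin n → Bool,
      ENNReal.ofReal (1-α) * μ (Y ⁻¹' G δ) ≤ μ (Y ⁻¹' (G δ ∩ A δ (Fin.last n))) := by
    intro δ
    have hpoint : ∀ ω : Ω, km δ ≤ ((F δ).filter (fun j => ω ∈ Y ⁻¹' (A δ j))).card := by
      intro ω
      have h0 := rank_count_lemma (fun i => g (Y ω) i) (km δ) (hk1 δ) (F δ)
      rw [hFcard δ, min_eq_left (hkm1 δ)] at h0
      have hfeq : (F δ).filter (fun j => ω ∈ Y ⁻¹' (A δ j))
          = (F δ).filter (fun j =>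
              (((F δ).erase j).filter (fun i => g (Y ω) i < g (Y ω) j)).card < km δ) :=
        Finset.filter_congr (fun j _ => by
          simp only [Set.mem_preimage, hA, Set.mem_setOf_eq])
      rw [hfeq]
      exact h0
    have hsum := mul_meas_le_sum μ (F δ) (Y ⁻¹' G δ) (fun j => Y ⁻¹' (A δ j))
      (hYmeas (hGm δ)) (fun j => hYmeas (hAm δ j)) (km δ) hpoint
    have hterm : ∀ j ∈ F δ, μ (Y ⁻¹' G δ ∩ Y ⁻¹' (A δ j)) = μ (Y ⁻¹' (G δ ∩ A δ j)) := by
      intro j _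
      rw [Set.preimage_inter]
    have hsum2 : ∑ j ∈ F δ, μ (Y ⁻¹' G δ ∩ Y ⁻¹' (A δ j))
        = μ (Y ⁻¹' (G δ ∩ A δ (Fin.last n)))
          + ∑ j ∈ (F δ).erase (Fin.last n), μ (Y ⁻¹' (G δ ∩ A δ j)) := by
      rw [Finset.sum_congr rfl hterm]
      conv_lhs => rw [← Finset.insert_erase (hlastF δ)]
      rw [Finset.sum_insert (Finset.notMem_erase _ _)]
    have hsum3 : ∑ j ∈ (F δ).erase (Fin.last n), μ (Y ⁻¹' (G δ ∩ A δ j))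
        = ((D δ).card : ℝ≥0∞) * μ (Y ⁻¹' (G δ ∩ A δ (Fin.last n))) := by
      rw [Finset.sum_congr rfl (hswap δ), Finset.sum_const, hFerase δ, Finset.card_map,
        nsmul_eq_mul]
    have hmain : (km δ : ℝ≥0∞) * μ (Y ⁻¹' G δ)
        ≤ (((D δ).card : ℝ≥0∞) + 1) * μ (Y ⁻¹' (G δ ∩ A δ (Fin.last n))) := by
      calc (km δ : ℝ≥0∞) * μ (Y ⁻¹' G δ)
          ≤ ∑ j ∈ F δ, μ (Y ⁻¹' G δ ∩ Y ⁻¹' (A δ j)) := hsum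
        _ = μ (Y ⁻¹' (G δ ∩ A δ (Fin.last n)))
            + ((D δ).card : ℝ≥0∞) * μ (Y ⁻¹' (G δ ∩ A δ (Fin.last n))) := by
            rw [hsum2, hsum3]
        _ = (((D δ).card : ℝ≥0∞) + 1) * μ (Y ⁻¹' (G δ ∩ A δ (Fin.last n))) := by ring
    have hcoef : ENNReal.ofReal (1-α) * (((D δ).card : ℝ≥0∞) + 1) ≤ (km δ : ℝ≥0∞) := by
      have h1 : ((1:ℝ)-α) * (((D δ).card : ℝ) + 1) ≤ (km δ : ℝ) := Nat.le_ceil _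
      calc ENNReal.ofReal (1-α) * (((D δ).card : ℝ≥0∞) + 1)
          = ENNReal.ofReal ((1-α) * (((D δ).card : ℝ) + 1)) := by
            rw [ENNReal.ofReal_mul (by linarith)]
            congr 1
            rw [ENNReal.ofReal_add (Nat.cast_nonneg _) zero_le_one,
              ENNReal.ofReal_natCast, ENNReal.ofReal_one]
        _ ≤ ENNReal.ofReal (km δ : ℝ) := ENNReal.ofReal_le_ofReal h1
        _ = (km δ : ℝ≥0∞) := ENNReal.ofReal_natCast _
    have hne0 : (((D δ).card : ℝ≥0∞) + 1) ≠ 0 := by simp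
    have hnetop : (((D δ).card : ℝ≥0∞) + 1) ≠ ⊤ :=
      ENNReal.add_ne_top.2 ⟨ENNReal.natCast_ne_top _, ENNReal.one_ne_top⟩
    refine (ENNReal.mul_le_mul_iff_right hne0 hnetop).1 ?_
    calc (((D δ).card : ℝ≥0∞) + 1) * (ENNReal.ofReal (1-α) * μ (Y ⁻¹' G δ))
        = (ENNReal.ofReal (1-α) * (((D δ).card : ℝ≥0∞) + 1)) * μ (Y ⁻¹' G δ) := by ring
      _ ≤ (km δ : ℝ≥0∞) * μ (Y ⁻¹' G δ) := mul_le_mul_left hcoef _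
      _ ≤ (((D δ).card : ℝ≥0∞) + 1) * μ (Y ⁻¹' (G δ ∩ A δ (Fin.last n))) := hmain
  rw [cond_apply hEm]
  have hdiv : (μ E)⁻¹ * μ (E ∩ Aset) = μ (E ∩ Aset) / μ E := by
    rw [mul_comm, ENNReal.div_eq_inv_mul, mul_comm]
  rw [hdiv, ENNReal.le_div_iff_mul_le (Or.inl hpos) (Or.inl (measure_ne_top μ E))]
  calc ENNReal.ofReal (1-α) * μ E
      = ∑ δ ∈ (Finset.univ : Finset (Fin n → Bool)),
          ENNReal.ofReal (1-α) * μ (Y ⁻¹' G δ) := by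
        rw [hEdecomp, Finset.mul_sum]
    _ ≤ ∑ δ ∈ (Finset.univ : Finset (Fin n → Bool)),
          μ (Y ⁻¹' (G δ ∩ A δ (Fin.last n))) :=
        Finset.sum_le_sum (fun δ _ => key δ)
    _ = μ (E ∩ Aset) := hEAdecomp.symm
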